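/- Consider two DAGs G and G' with the same skeleton whose topological orderings differ only by altering the position of one node z (with x preceding y in both). Suppose that the induced subgraphs agree, G_{rch(G,x,y)} = G'_{rch(G',x,y)}, that clr(G,x,y) = clr(G',x,y), that forb(G,x,y) = forb(G',x,y), and that de_G(c) = de_{G'}(c) for every c ∈ clr(G,x,y). Then a set A is a valid adjustment set in G if and only if A is a valid adjustment set in G'. -/

import Mathlib

/-- Adjacency in the skeleton of a digraph given by edge relation `G`. -/
def skelAdj {V : Type*} (G : V → V → Prop) (a b : V) : Prop := G a b ∨ G b a

/-- A digraph is acyclic (a DAG) if it has no directed cycle. -/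
def IsAcyclicDigraph {V : Type*} (G : V → V → Prop) : Prop :=
  ∀ v, ¬ Relation.TransGen G v v

/-- A path: a list of distinct vertices in which consecutive vertices are
joined by an edge (of either orientation). -/
def IsPath {V : Type*} (G : V → V → Prop) (p : List V) : Prop :=
  p.Nodup ∧ p.Chain' (skelAdj G)

/-- A path between `x` and `y` (written from `x` to `y`). -/
def IsPathBetween {V : Type*} (G : V → V → Prop) (x y : V) (p : List V) : Prop :=
  IsPath G p ∧ p.head? = some x ∧ p.getLast? = some y

/-- A directed (causal) path from `x` to `y`: every edge points towards `y`. -/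
def IsDirPath {V : Type*} (G : V → V → Prop) (x y : V) (p : List V) : Prop :=
  p.Nodup ∧ p.Chain' G ∧ p.head? = some x ∧ p.getLast? = some y

/-- `w` is a collider on the path `p`: both edges of `p` at `w` point into `w`. -/
def IsCollider {V : Type*} (G : V → V → Prop) (p : List V) (w : V) : Prop :=
  ∃ a b, [a, w, b] <:+: p ∧ G a w ∧ G b w

/-- Descendants of a vertex (including the vertex itself). -/
def descendants {V : Type*} (G : V → V → Prop) (v : V) : Set V :=
  {w | Relation.ReflTransGen G v w}

/-- Ancestors of a vertex (including the vertex itself). -/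
def ancestors {V : Type*} (G : V → V → Prop) (v : V) : Set V :=
  {w | Relation.ReflTransGen G w v}

/-- Parents of a vertex. -/
def parents {V : Type*} (G : V → V → Prop) (v : V) : Set V := {w | G w v}

/-- Descendants of a set of vertices. -/
def descendantsSet {V : Type*} (G : V → V → Prop) (W : Set V) : Set V :=
  ⋃ v ∈ W, descendants G v

/-- Ancestors of a set of vertices. -/
def ancestorsSet {V : Type*} (G : V → V → Prop) (W : Set V) : Set V :=
  ⋃ v ∈ W, ancestors G v

/-- Parents of a set of vertices. -/
def parentsSet {V : Type*} (G : V → V → Prop) (W : Set V) : Set V :=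
  ⋃ v ∈ W, parents G v

/-- A path `p` is blocked by a vertex set `A`: it contains a non-collider in `A`,
or a collider `c` with `descendants G c ∩ A = ∅`. -/
def Blocked {V : Type*} (G : V → V → Prop) (A : Set V) (p : List V) : Prop :=
  (∃ w ∈ p, ¬ IsCollider G p w ∧ w ∈ A) ∨
    (∃ c, IsCollider G p c ∧ descendants G c ∩ A = ∅)

/-- `cn G x y`: vertices `z ≠ x` lying on some directed path from `x` to `y`. -/
def cn {V : Type*} (G : V → V → Prop) (x y : V) : Set V :=
  {z | z ≠ x ∧ ∃ p, IsDirPath G x y p ∧ z ∈ p}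

/-- The forbidden set `forb G x y = de(cn(G,x,y)) ∪ {x}`. -/
def forb {V : Type*} (G : V → V → Prop) (x y : V) : Set V :=
  descendantsSet G (cn G x y) ∪ {x}

/-- `A ⊆ V \ {x,y}` is a valid adjustment set in `G`:
(i) `A ∩ forb(G,x,y) = ∅`, and (ii) every non-causal path from `x` to `y` is
blocked by `A`. -/
def IsValidAdjustment {V : Type*} (G : V → V → Prop) (x y : V) (A : Set V) : Prop :=
  x ∉ A ∧ y ∉ A ∧ A ∩ forb G x y = ∅ ∧
    ∀ p, IsPathBetween G x y p → ¬ p.Chain' G → Blocked G A p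

/-- `rch G x y`: vertices lying on some path between `x` and `y` in the skeleton. -/
def rch {V : Type*} (G : V → V → Prop) (x y : V) : Set V :=
  {z | ∃ p, IsPathBetween G x y p ∧ z ∈ p}

/-- Induced subgraph of `G` on a vertex set `S`. -/
def induce {V : Type*} (G : V → V → Prop) (S : Set V) : V → V → Prop :=
  fun a b => G a b ∧ a ∈ S ∧ b ∈ S

/-- `clr G x y`: all colliders on any path from `x` to `y` in the induced
subgraph of `G` on `rch G x y`. -/
def clr {V : Type*} (G : V → V → Prop) (x y : V) : Set V :=
  {c | ∃ p, IsPathBetween (induce G (rch G x y)) x y p ∧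
      IsCollider (induce G (rch G x y)) p c}

/-- The optimal adjustment set `opadj G x y = pa(cn(G,x,y)) \ forb(G,x,y)`. -/
def opadj {V : Type*} (G : V → V → Prop) (x y : V) : Set V :=
  parentsSet G (cn G x y) \ forb G x y

/-- `G^{pd}_{xy}`: `G` with every edge from `x` to a child of `x` that is an
ancestor of `y` removed. -/
def pdGraph {V : Type*} (G : V → V → Prop) (x y : V) : V → V → Prop :=
  fun a b => G a b ∧ ¬ (a = x ∧ b ∈ ancestors G y)

/-- `τ` is a topological ordering of `G`. -/
def IsTopOrder {V : Type*} (G : V → V → Prop) (τ : V → ℕ) : Prop :=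
  Function.Injective τ ∧ ∀ a b, G a b → τ a < τ b

/-- `G'` is obtained from `G` by altering the position of the single node `z`
in a topological ordering of `G` (keeping the skeleton and the orientation of
all edges not incident to `z`, and reorienting edges incident to `z` according
to the new ordering), with `x` preceding `y` in both orderings. -/
def AlterOne {V : Type*} (G G' : V → V → Prop) (z x y : V) : Prop :=
  ∃ τ τ' : V → ℕ,
    IsTopOrder G τ ∧ IsTopOrder G' τ' ∧
    τ x < τ y ∧ τ' x < τ' y ∧
    (∀ a b, a ≠ z → b ≠ z → (τ a < τ b ↔ τ' a < τ' b)) ∧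
    (∀ a b, a ≠ z → b ≠ z → (G a b ↔ G' a b)) ∧
    (∀ a b, a = z ∨ b = z → (G' a b ↔ (skelAdj G a b ∧ τ' a < τ' b)))

section Helpers

variable {V : Type*} {G G' : V → V → Prop} {S : Set V} {x y : V} {p : List V}

lemma chain'_mono' {R R' : V → V → Prop} {p : List V}
    (h : ∀ a ∈ p, ∀ b ∈ p, R a b → R' a b) (hc : p.Chain' R) : p.Chain' R' := by
  simp only [List.Chain', List.isChain_iff_getElem] at hc ⊢
  intro i hi
  exact h _ (List.getElem_mem _) _ (List.getElem_mem _) (hc i hi)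

lemma mem_rch_of_path (hp : IsPathBetween G x y p) {v : V} (hv : v ∈ p) :
    v ∈ rch G x y := ⟨p, hp, hv⟩

lemma pathBetween_induce (hp : IsPathBetween G x y p) :
    IsPathBetween (induce G (rch G x y)) x y p := by
  obtain ⟨⟨hnd, hch⟩, hh, hl⟩ := hp
  refine ⟨⟨hnd, chain'_mono' (fun a ha b hb hab => ?_) hch⟩, hh, hl⟩
  have hp' : IsPathBetween G x y p := ⟨⟨hnd, hch⟩, hh, hl⟩
  rcases hab with h | h
  · exact Or.inl ⟨h, mem_rch_of_path hp' ha, mem_rch_of_path hp' hb⟩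
  · exact Or.inr ⟨h, mem_rch_of_path hp' hb, mem_rch_of_path hp' ha⟩

lemma pathBetween_of_induce (hp : IsPathBetween (induce G S) x y p) :
    IsPathBetween G x y p := by
  obtain ⟨⟨hnd, hch⟩, hh, hl⟩ := hp
  exact ⟨⟨hnd, hch.imp (fun _ _ h => h.imp And.left And.left)⟩, hh, hl⟩

lemma chain'_induce_of_path (hp : IsPathBetween G x y p) (hc : p.Chain' G) :
    p.Chain' (induce G (rch G x y)) :=
  chain'_mono' (fun a ha b hb hab =>
    ⟨hab, mem_rch_of_path hp ha, mem_rch_of_path hp hb⟩) hc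

lemma collider_induce_of_path (hp : IsPathBetween G x y p) {w : V}
    (hc : IsCollider G p w) : IsCollider (induce G (rch G x y)) p w := by
  obtain ⟨a, b, hinf, haw, hbw⟩ := hc
  have ha : a ∈ p := hinf.subset (by simp)
  have hw : w ∈ p := hinf.subset (by simp)
  have hb : b ∈ p := hinf.subset (by simp)
  exact ⟨a, b, hinf,
    ⟨haw, mem_rch_of_path hp ha, mem_rch_of_path hp hw⟩,
    ⟨hbw, mem_rch_of_path hp hb, mem_rch_of_path hp hw⟩⟩

lemma collider_of_induce {w : V} (hc : IsCollider (induce G S) p w) :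
    IsCollider G p w := by
  obtain ⟨a, b, hinf, haw, hbw⟩ := hc
  exact ⟨a, b, hinf, haw.1, hbw.1⟩

lemma valid_mono
    (hsub : induce G (rch G x y) = induce G' (rch G' x y))
    (hclr : clr G x y = clr G' x y)
    (hforb : forb G x y = forb G' x y)
    (hde : ∀ c ∈ clr G x y, descendants G c = descendants G' c)
    {A : Set V} (hv : IsValidAdjustment G x y A) :
    IsValidAdjustment G' x y A := by
  obtain ⟨hxA, hyA, hAf, hblk⟩ := hv
  refine ⟨hxA, hyA, hforb ▸ hAf, fun p hp' hnc' => ?_⟩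
  -- transfer the path from G' to G
  have hpI' : IsPathBetween (induce G' (rch G' x y)) x y p := pathBetween_induce hp'
  have hpI : IsPathBetween (induce G (rch G x y)) x y p := hsub ▸ hpI'
  have hp : IsPathBetween G x y p := pathBetween_of_induce hpI
  -- the path is non-causal in G as well
  have hnc : ¬ p.Chain' G := by
    intro hc
    apply hnc'
    have : p.Chain' (induce G (rch G x y)) := chain'_induce_of_path hp hc
    rw [hsub] at this
    exact this.imp (fun _ _ h => h.1)
  -- collider equivalence on this path
  have hcol : ∀ w, IsCollider G p w ↔ IsCollider G' p w := by
    intro w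
    constructor
    · intro h
      exact collider_of_induce (hsub ▸ collider_induce_of_path hp h)
    · intro h
      exact collider_of_induce (hsub ▸ collider_induce_of_path hp' h)
  rcases hblk p hp hnc with ⟨w, hwp, hwnc, hwA⟩ | ⟨c, hcc, hcd⟩
  · exact Or.inl ⟨w, hwp, fun h => hwnc ((hcol w).mpr h), hwA⟩
  · refine Or.inr ⟨c, (hcol c).mp hcc, ?_⟩
    have hcclr : c ∈ clr G x y := ⟨p, hpI, collider_induce_of_path hp hcc⟩
    rw [← hde c hcclr]
    exact hcd

end Helpers

/-- Proposition: invariant adjustment sets. -/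
theorem statement0 {V : Type*} (G G' : V → V → Prop) (z x y : V)
    (halt : AlterOne G G' z x y)
    (hsub : induce G (rch G x y) = induce G' (rch G' x y))
    (hclr : clr G x y = clr G' x y)
    (hforb : forb G x y = forb G' x y)
    (hde : ∀ c ∈ clr G x y, descendants G c = descendants G' c)
    (A : Set V) :
    IsValidAdjustment G x y A ↔ IsValidAdjustment G' x y A := by
  constructor
  · exact valid_mono hsub hclr hforb hde
  · exact valid_mono hsub.symm hclr.symm hforb.symm
      (fun c hc => (hde c (hclr ▸ hc)).symm)
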